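/- Assume φ : A → ℕ is conserved by F. Then there exists a particle displacement rule compatible with F and φ: a function d : ({−2B, …, 2B} → A) → ({−B, …, B} → ℕ) such that, writing d_{x→y}(a) = d(j ↦ a(x + j))(y − x) for a : ℤ → A and x, y ∈ ℤ with |y − x| ≤ B, the following hold for every configuration a : ℤ → A and every x ∈ ℤ: (C1) φ(a(x)) = ∑_{y = x−B}^{x+B} d_{x→y}(a), and (C2) φ(F(a)(x)) = ∑_{y = x−B}^{x+B} d_{y→x}(a). -/

import Mathlib

/-- The cellular automaton induced by a local rule `f` on neighbourhood `B`. -/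
def induce {X A : Type*} [AddCommGroup X] (B : Finset X) (f : (B → A) → A)
    (a : X → A) : X → A :=
  fun x => f fun b => a (x + b.1)

/-- `ψ` is conserved by the CA induced by `f` on `B`. -/
def conserved {X A Z : Type*} [AddCommGroup X] [AddCommMonoid Z] (B : Finset X)
    (f : (B → A) → A) (ψ : A → Z) : Prop :=
  (∃ a : A, ψ a = 0) ∧
  (∀ a : X → A, (Function.support fun x => ψ (a x)).Finite →
      (Function.support fun x => ψ (induce B f a x)).Finite) ∧
  (∀ a : X → A, (Function.support fun x => ψ (a x)).Finite →
      ∑ᶠ x, ψ (induce B f a x) = ∑ᶠ x, ψ (a x))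

namespace CAflow

/-- splitting a sum over an integer interval -/
lemma sum_Icc_split (g : ℤ → ℤ) {a b c : ℤ} (h1 : a ≤ b + 1) (h2 : b ≤ c) :
    ∑ z ∈ Finset.Icc a c, g z
      = ∑ z ∈ Finset.Icc a b, g z + ∑ z ∈ Finset.Icc (b+1) c, g z := by
  rw [← Finset.sum_union]
  · congr 1
    ext z
    simp only [Finset.mem_union, Finset.mem_Icc]
    omega
  · rw [Finset.disjoint_left]
    intro z hz hz'
    simp only [Finset.mem_Icc] at hz hz'
    omega

lemma sum_Icc_singleton (g : ℤ → ℤ) (a : ℤ) : ∑ z ∈ Finset.Icc a a, g z = g a := by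
  rw [Finset.Icc_self, Finset.sum_singleton]

lemma sum_Icc_empty (g : ℤ → ℤ) {a b : ℤ} (h : b < a) : ∑ z ∈ Finset.Icc a b, g z = 0 := by
  rw [Finset.Icc_eq_empty (by omega), Finset.sum_empty]

/-- shifting a sum over an integer interval -/
lemma sum_shift (g h : ℤ → ℤ) (lo hi x : ℤ)
    (hgh : ∀ z, lo ≤ z → z ≤ hi → g z = h (x + z)) :
    ∑ z ∈ Finset.Icc lo hi, g z = ∑ z ∈ Finset.Icc (x + lo) (x + hi), h z := by
  rw [← Finset.map_add_left_Icc, Finset.sum_map]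
  refine Finset.sum_congr rfl ?_
  intro z hz
  rw [Finset.mem_Icc] at hz
  exact hgh z hz.1 hz.2

section

variable {A : Type*} (B : ℤ) (f : ((Finset.Icc (-B) B : Finset ℤ) → A) → A)
  (φ : A → ℕ) (q : A)

/-- cast of input weight -/
def P (a : ℤ → A) (z : ℤ) : ℤ := (φ (a z) : ℤ)

/-- cast of output weight -/
noncomputable def Q (a : ℤ → A) (z : ℤ) : ℤ := (φ (induce (Finset.Icc (-B) B) f a z) : ℤ)

/-- truncation: vacuum strictly below `m` -/
def Ltr (m : ℤ) (a : ℤ → A) : ℤ → A := fun z => if m ≤ z then a z else q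

/-- truncation to `[m,n]` -/
def tr (m n : ℤ) (a : ℤ → A) : ℤ → A := fun z => if m ≤ z ∧ z ≤ n then a z else q

/-- the flux at boundary `m` -/
noncomputable def Lam (a : ℤ → A) (m : ℤ) : ℤ :=
  ∑ y ∈ Finset.Icc (m - B) (m + B - 1), Q B f φ (Ltr q m a) y

noncomputable def Srel (a : ℤ → A) (x u : ℤ) : ℤ := ∑ z ∈ Finset.Icc (x - B) u, P φ a z

noncomputable def Trel (a : ℤ → A) (x w : ℤ) : ℤ :=
  Lam B f φ q a (x - 2*B) - (∑ z ∈ Finset.Icc (x - 2*B) (x - B - 1), P φ a z)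
    + ∑ z ∈ Finset.Icc (x - B) w, Q B f φ a z

noncomputable def dd (a : ℤ → A) (x k : ℤ) : ℕ :=
  (min (Srel B φ a x x) (Trel B f φ q a x (x + k))
    - max (Srel B φ a x (x - 1)) (Trel B f φ q a x (x + k - 1))).toNat

variable {B f φ q}

lemma P_nonneg (a : ℤ → A) (z : ℤ) : 0 ≤ P φ a z := Int.natCast_nonneg _
lemma Q_nonneg (a : ℤ → A) (z : ℤ) : 0 ≤ Q B f φ a z := Int.natCast_nonneg _
lemma Lam_nonneg (a : ℤ → A) (m : ℤ) : 0 ≤ Lam B f φ q a m :=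
  Finset.sum_nonneg fun _ _ => Q_nonneg _ _

lemma Q_congr {a b : ℤ → A} {y : ℤ}
    (h : ∀ z, y - B ≤ z → z ≤ y + B → a z = b z) : Q B f φ a y = Q B f φ b y := by
  unfold Q induce
  have : (fun j : (Finset.Icc (-B) B : Finset ℤ) => a (y + j.1))
      = fun j : (Finset.Icc (-B) B : Finset ℤ) => b (y + j.1) := by
    funext j
    have hj := j.2
    rw [Finset.mem_Icc] at hj
    exact h _ (by omega) (by omega)
  rw [this]

end

section

variable {A : Type*} {B : ℤ} (hB : 1 ≤ B)
  {f : ((Finset.Icc (-B) B : Finset ℤ) → A) → A}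
  {φ : A → ℕ} {q : A} (hq : φ q = 0)
  (hcons : conserved (Finset.Icc (-B) B) f φ)

include hq hcons

lemma L0 : φ (f (fun _ => q)) = 0 := by
  by_contra h
  have hsup : (Function.support fun x : ℤ => φ ((fun _ : ℤ => q) x)).Finite := by
    convert Set.finite_empty
    ext z; simp [hq]
  have := hcons.2.1 (fun _ => q) hsup
  have heq : (Function.support fun x : ℤ => φ (induce (Finset.Icc (-B) B) f (fun _ => q) x))
      = Set.univ := by
    ext z
    simp only [Set.mem_univ, iff_true, Function.mem_support]
    exact h
  rw [heq] at this
  exact Set.infinite_univ this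

/-- conservation on truncated configurations, in interval form -/
lemma CONS (a : ℤ → A) (m n : ℤ) :
    ∑ y ∈ Finset.Icc (m - B) (n + B), Q B f φ (tr q m n a) y
      = ∑ z ∈ Finset.Icc m n, P φ a z := by
  set b := tr q m n a with hb
  have hsup : (Function.support fun x => φ (b x)) ⊆ ↑(Finset.Icc m n) := by
    intro z hz
    rw [Function.mem_support] at hz
    by_contra hz'
    simp only [Finset.coe_Icc, Set.mem_Icc] at hz'
    have : b z = q := by simp only [hb, tr]; rw [if_neg (by omega)]
    rw [this, hq] at hz
    exact hz rfl
  have hfin : (Function.support fun x => φ (b x)).Finite :=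
    Set.Finite.subset (Finset.Icc m n).finite_toSet hsup
  have hmain := hcons.2.2 b hfin
  have hsup' : (Function.support fun x => φ (induce (Finset.Icc (-B) B) f b x))
      ⊆ ↑(Finset.Icc (m - B) (n + B)) := by
    intro y hy
    rw [Function.mem_support] at hy
    by_contra hy'
    simp only [Finset.coe_Icc, Set.mem_Icc] at hy'
    have : induce (Finset.Icc (-B) B) f b y = f (fun _ => q) := by
      unfold induce
      congr 1
      funext j
      have hj := j.2
      rw [Finset.mem_Icc] at hj
      simp only [hb, tr]
      rw [if_neg (by omega)]
    rw [this, L0 hq hcons] at hy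
    exact hy rfl
  rw [finsum_eq_sum_of_support_subset _ hsup', finsum_eq_sum_of_support_subset _ hsup] at hmain
  have : ∑ z ∈ Finset.Icc m n, φ (b z) = ∑ z ∈ Finset.Icc m n, φ (a z) := by
    refine Finset.sum_congr rfl ?_
    intro z hz
    rw [Finset.mem_Icc] at hz
    simp only [hb, tr]
    rw [if_pos (by omega)]
  rw [this] at hmain
  unfold Q P
  exact_mod_cast congrArg (Nat.cast : ℕ → ℤ) hmain

end

section

variable {A : Type*} {B : ℤ} (hB : 1 ≤ B)
  {f : ((Finset.Icc (-B) B : Finset ℤ) → A) → A}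
  {φ : A → ℕ} {q : A} (hq : φ q = 0)
  (hcons : conserved (Finset.Icc (-B) B) f φ)

include hB hq hcons

/-- the continuity equation -/
lemma CONT (a : ℤ → A) (m : ℤ) :
    Lam B f φ q a m + Q B f φ a (m + B) = Lam B f φ q a (m + 1) + P φ a m := by
  have h1 := CONS hq hcons a m (m + 2*B)
  have h2 := CONS hq hcons a (m+1) (m + 2*B)
  set b1 := tr q m (m + 2*B) a with hb1
  set b2 := tr q (m+1) (m + 2*B) a with hb2
  -- split h1
  rw [sum_Icc_split _ (show m - B ≤ (m + B - 1) + 1 by omega) (show m + B - 1 ≤ m + 2*B + B by omega)] at h1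
  rw [show m + B - 1 + 1 = m + B by ring] at h1
  rw [sum_Icc_split _ (show m + B ≤ m + B + 1 by omega) (show m + B ≤ m + 2*B + B by omega)] at h1
  rw [sum_Icc_singleton] at h1
  -- split h2
  rw [sum_Icc_split _ (show m + 1 - B ≤ (m + B) + 1 by omega) (show m + B ≤ m + 2*B + B by omega)] at h2
  -- identify flux terms
  have A1 : ∑ y ∈ Finset.Icc (m - B) (m + B - 1), Q B f φ b1 y = Lam B f φ q a m := by
    unfold Lam
    refine Finset.sum_congr rfl ?_
    intro y hy
    rw [Finset.mem_Icc] at hy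
    refine Q_congr ?_
    intro z hz1 hz2
    simp only [hb1, tr, Ltr]
    by_cases hm : m ≤ z
    · rw [if_pos (by omega), if_pos (by omega)]
    · rw [if_neg (by omega), if_neg (by omega)]
  have A2 : ∑ y ∈ Finset.Icc (m + 1 - B) (m + B), Q B f φ b2 y = Lam B f φ q a (m+1) := by
    unfold Lam
    rw [show m + 1 - B = (m+1) - B by ring]
    refine Finset.sum_congr (by congr 1; omega) ?_
    intro y hy
    rw [Finset.mem_Icc] at hy
    refine Q_congr ?_
    intro z hz1 hz2
    simp only [hb2, tr, Ltr]
    by_cases hm : m + 1 ≤ z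
    · rw [if_pos (by omega), if_pos (by omega)]
    · rw [if_neg (by omega), if_neg (by omega)]
  have A3 : Q B f φ b1 (m + B) = Q B f φ a (m + B) := by
    refine Q_congr ?_
    intro z hz1 hz2
    simp only [hb1, tr]
    rw [if_pos (by omega)]
  have A4 : ∑ y ∈ Finset.Icc (m + B + 1) (m + 2*B + B), Q B f φ b1 y
      = ∑ y ∈ Finset.Icc (m + B + 1) (m + 2*B + B), Q B f φ b2 y := by
    refine Finset.sum_congr rfl ?_
    intro y hy
    rw [Finset.mem_Icc] at hy
    refine Q_congr ?_
    intro z hz1 hz2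
    simp only [hb1, hb2, tr]
    by_cases hm : z ≤ m + 2*B
    · by_cases hm2 : m + 1 ≤ z
      · rw [if_pos (by omega), if_pos (by omega)]
      · omega
    · rw [if_neg (by omega), if_neg (by omega)]
  -- split RHS of h1
  rw [sum_Icc_split _ (show m ≤ m + 1 by omega) (show m ≤ m + 2*B by omega), sum_Icc_singleton] at h1
  rw [A1, A3, A4] at h1
  rw [A2] at h2
  omega

/-- the flux is bounded by the mass just right of the boundary -/
lemma L1 (a : ℤ → A) (m : ℤ) :
    Lam B f φ q a m ≤ ∑ z ∈ Finset.Icc m (m + 2*B - 1), P φ a z := by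
  have h1 := CONS hq hcons a m (m + 2*B - 1)
  set b := tr q m (m + 2*B - 1) a with hb
  rw [sum_Icc_split _ (show m - B ≤ (m + B - 1) + 1 by omega)
    (show m + B - 1 ≤ m + 2*B - 1 + B by omega)] at h1
  have A1 : ∑ y ∈ Finset.Icc (m - B) (m + B - 1), Q B f φ b y = Lam B f φ q a m := by
    unfold Lam
    refine Finset.sum_congr rfl ?_
    intro y hy
    rw [Finset.mem_Icc] at hy
    refine Q_congr ?_
    intro z hz1 hz2
    simp only [hb, tr, Ltr]
    by_cases hm : m ≤ z
    · rw [if_pos (by omega), if_pos (by omega)]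
    · rw [if_neg (by omega), if_neg (by omega)]
  rw [A1] at h1
  have : 0 ≤ ∑ y ∈ Finset.Icc (m + B - 1 + 1) (m + 2*B - 1 + B), Q B f φ b y :=
    Finset.sum_nonneg fun _ _ => Q_nonneg _ _
  omega

/-- telescoped continuity -/
lemma TEL (a : ℤ → A) (m : ℤ) : ∀ k, m ≤ k →
    Lam B f φ q a m + ∑ z ∈ Finset.Icc (m + B) (k + B - 1), Q B f φ a z
      = Lam B f φ q a k + ∑ z ∈ Finset.Icc m (k - 1), P φ a z := by
  refine Int.le_induction ?_ ?_
  · rw [sum_Icc_empty _ (by omega), sum_Icc_empty _ (by omega)]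
  · intro k hk ih
    have hc := CONT hB hq hcons a k
    rw [sum_Icc_split _ (show m + B ≤ (k + B - 1) + 1 by omega) (show k + B - 1 ≤ k + 1 + B - 1 by omega),
      show k + B - 1 + 1 = k + B by ring, show k + 1 + B - 1 = k + B by ring, sum_Icc_singleton]
    rw [sum_Icc_split _ (show m ≤ (k-1) + 1 by omega) (show k - 1 ≤ k + 1 - 1 by omega),
      show k - 1 + 1 = k by ring, show k + 1 - 1 = k by ring, sum_Icc_singleton]
    omega

/-- expression for Trel in terms of Srel and the flux -/
lemma Trel_eq (a : ℤ → A) (x w : ℤ) (hw : x - 1 ≤ w) :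
    Trel B f φ q a x w = Srel B φ a x (w - B) + Lam B f φ q a (w - B + 1) := by
  have h := TEL hB hq hcons a (x - 2*B) (w - B + 1) (by omega)
  unfold Trel Srel
  rw [show x - 2*B + B = x - B by ring, show w - B + 1 + B - 1 = w by ring,
    show w - B + 1 - 1 = w - B by ring] at h
  rw [sum_Icc_split (P φ a) (show x - 2*B ≤ (x - B - 1) + 1 by omega) (show x - B - 1 ≤ w - B by omega),
    show x - B - 1 + 1 = x - B by ring] at h
  omega

lemma Trel_mono (a : ℤ → A) (x w : ℤ) (hw : x - B ≤ w) :
    Trel B f φ q a x w = Trel B f φ q a x (w - 1) + Q B f φ a w := by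
  unfold Trel
  rw [sum_Icc_split (Q B f φ a) (show x - B ≤ (w - 1) + 1 by omega) (show w - 1 ≤ w by omega),
    show w - 1 + 1 = w by ring, sum_Icc_singleton]
  ring

lemma Srel_mono (a : ℤ → A) (x u : ℤ) (hu : x - B ≤ u) :
    Srel B φ a x u = Srel B φ a x (u - 1) + P φ a u := by
  unfold Srel
  rw [sum_Icc_split (P φ a) (show x - B ≤ (u - 1) + 1 by omega) (show u - 1 ≤ u by omega),
    show u - 1 + 1 = u by ring, sum_Icc_singleton]

/-- C1 coverage, upper -/
lemma c1_hi (a : ℤ → A) (x : ℤ) : Srel B φ a x x ≤ Trel B f φ q a x (x + B) := by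
  rw [Trel_eq hB hq hcons a x (x + B) (by omega), show x + B - B = x by ring]
  have := Lam_nonneg (B:=B) (f:=f) (φ:=φ) (q:=q) a (x+1)
  omega

/-- C1 coverage, lower -/
lemma c1_lo (a : ℤ → A) (x : ℤ) : Trel B f φ q a x (x - B - 1) ≤ Srel B φ a x (x - 1) := by
  unfold Trel Srel
  rw [sum_Icc_empty (Q B f φ a) (by omega)]
  have h := L1 hB hq hcons a (x - 2*B)
  rw [show x - 2*B + 2*B - 1 = x - 1 by ring] at h
  rw [sum_Icc_split (P φ a) (show x - 2*B ≤ (x - B - 1) + 1 by omega) (show x - B - 1 ≤ x - 1 by omega),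
    show x - B - 1 + 1 = x - B by ring] at h
  omega

/-- C2 coverage, upper -/
lemma c2_hi (a : ℤ → A) (y : ℤ) : Trel B f φ q a y (y - B) ≤ Srel B φ a y y := by
  have hc := CONT hB hq hcons a (y - 2*B)
  rw [show y - 2*B + B = y - B by ring] at hc
  have h := L1 hB hq hcons a (y - 2*B + 1)
  rw [show y - 2*B + 1 + 2*B - 1 = y by ring] at h
  rw [sum_Icc_split (P φ a) (show y - 2*B + 1 ≤ (y - B - 1) + 1 by omega)
    (show y - B - 1 ≤ y by omega), show y - B - 1 + 1 = y - B by ring] at h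
  unfold Trel Srel
  rw [sum_Icc_singleton]
  rw [sum_Icc_split (P φ a) (show y - 2*B ≤ (y - 2*B) + 1 by omega)
    (show y - 2*B ≤ y - B - 1 by omega), sum_Icc_singleton]
  omega

/-- C2 coverage, lower -/
lemma c2_lo (a : ℤ → A) (y : ℤ) : Srel B φ a y (y - 1) ≤ Trel B f φ q a y (y + B - 1) := by
  rw [Trel_eq hB hq hcons a y (y + B - 1) (by omega), show y + B - 1 - B = y - 1 by ring]
  have := Lam_nonneg (B:=B) (f:=f) (φ:=φ) (q:=q) a (y-1+1)
  omega

end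

end CAflow


namespace CAflow

/-- telescoping sum of clamped increments -/
lemma clamp_sum (T : ℤ → ℤ) (Pv Qv : ℤ) (hQP : Qv ≤ Pv) (l : ℤ) :
    ∀ r, l - 1 ≤ r → (∀ w, l ≤ w → w ≤ r → T (w - 1) ≤ T w) →
    ∑ w ∈ Finset.Icc l r, max 0 (min Pv (T w) - max Qv (T (w - 1)))
      = max Qv (min Pv (T r)) - max Qv (min Pv (T (l - 1))) := by
  refine Int.le_induction ?_ ?_
  · intro _
    rw [sum_Icc_empty _ (by omega)]
    omega
  · intro r hr ih hmono
    rw [sum_Icc_split _ (show l ≤ r + 1 by omega) (show r ≤ r + 1 by omega),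
      sum_Icc_singleton, ih (fun w h1 h2 => hmono w h1 (by omega))]
    have hstep : T (r + 1 - 1) ≤ T (r + 1) := hmono (r+1) (by omega) (by omega)
    rw [show r + 1 - 1 = r by ring] at hstep ⊢
    omega

section

variable {A : Type*} {B : ℤ} (hB : 1 ≤ B)
  {f : ((Finset.Icc (-B) B : Finset ℤ) → A) → A}
  {φ : A → ℕ} {q : A} (hq : φ q = 0)
  (hcons : conserved (Finset.Icc (-B) B) f φ)

include hB hq hcons

lemma C1sum (a : ℤ → A) (x : ℤ) :
    ∑ y ∈ Finset.Icc (x - B) (x + B), ((dd B f φ q a x (y - x) : ℤ)) = P φ a x := by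
  have hterm : ∀ y ∈ Finset.Icc (x - B) (x + B), ((dd B f φ q a x (y - x) : ℤ))
      = max 0 (min (Srel B φ a x x) (Trel B f φ q a x y)
          - max (Srel B φ a x (x - 1)) (Trel B f φ q a x (y - 1))) := by
    intro y _
    unfold dd
    rw [show x + (y - x) = y by ring]
    omega
  rw [Finset.sum_congr rfl hterm]
  have hQP : Srel B φ a x (x - 1) ≤ Srel B φ a x x := by
    have := Srel_mono (B:=B) (f:=f) (q:=q) hB hq hcons a x x (by omega)
    have := P_nonneg (φ := φ) a x
    omega
  rw [clamp_sum (Trel B f φ q a x) _ _ hQP (x - B) (x + B) (by omega) ?_]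
  · have h1 := c1_hi hB hq hcons a x
    have h2 := c1_lo hB hq hcons a x
    rw [show x - B - 1 = x - B - 1 by ring]
    have h3 := Srel_mono (B:=B) (f:=f) (q:=q) hB hq hcons a x x (by omega)
    omega
  · intro w hw1 _
    have := Trel_mono (B:=B) (f:=f) (q:=q) hB hq hcons a x w (by omega)
    have := Q_nonneg (B:=B) (f:=f) (φ:=φ) a w
    omega

/-- rebasing Srel -/
lemma Srel_rebase (a : ℤ → A) (x y u : ℤ) (h1 : x - 3*B ≤ y - B) (h2 : y - B - 1 ≤ u) :
    Srel B φ a y u = Srel B φ a (x - 2*B) u - Srel B φ a (x - 2*B) (y - B - 1) := by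
  unfold Srel
  rw [show x - 2*B - B = x - 3*B by ring]
  rw [sum_Icc_split (P φ a) (show x - 3*B ≤ (y - B - 1) + 1 by omega) h2,
    show y - B - 1 + 1 = y - B by ring]
  ring

/-- the rebased output potential -/
noncomputable def UU (a : ℤ → A) (x y w : ℤ) : ℤ :=
  Trel B f φ q a y w + Srel B φ a (x - 2*B) (y - B - 1)

lemma Ustep (a : ℤ → A) (x w y : ℤ) (hy1 : x - B ≤ y) (hw : y - B ≤ w) :
    UU (B:=B) (f:=f) (φ:=φ) (q:=q) a x (y + 1) w = UU (B:=B) (f:=f) (φ:=φ) (q:=q) a x y w := by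
  unfold UU Trel
  rw [show y + 1 - B - 1 = y - B by ring, show y + 1 - B = y - B + 1 by ring,
    show y + 1 - 2*B = y - 2*B + 1 by ring]
  have e1 : ∑ z ∈ Finset.Icc (y - B) w, Q B f φ a z
      = Q B f φ a (y - B) + ∑ z ∈ Finset.Icc (y - B + 1) w, Q B f φ a z := by
    rw [sum_Icc_split (Q B f φ a) (show y - B ≤ (y - B) + 1 by omega) hw, sum_Icc_singleton]
  have e2 : ∑ z ∈ Finset.Icc (y - 2*B) (y - B - 1), P φ a z
      = P φ a (y - 2*B) + ∑ z ∈ Finset.Icc (y - 2*B + 1) (y - B - 1), P φ a z := by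
    rw [sum_Icc_split (P φ a) (show y - 2*B ≤ (y - 2*B) + 1 by omega)
      (show y - 2*B ≤ y - B - 1 by omega), sum_Icc_singleton]
  have e3 : ∑ z ∈ Finset.Icc (y - 2*B + 1) (y - B), P φ a z
      = ∑ z ∈ Finset.Icc (y - 2*B + 1) (y - B - 1), P φ a z + P φ a (y - B) := by
    rw [sum_Icc_split (P φ a) (show y - 2*B + 1 ≤ (y - B - 1) + 1 by omega)
      (show y - B - 1 ≤ y - B by omega), show y - B - 1 + 1 = y - B by ring, sum_Icc_singleton]
  have e5 : Srel B φ a (x - 2*B) (y - B) =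
      Srel B φ a (x - 2*B) (y - B - 1) + P φ a (y - B) :=
    Srel_mono hB hq hcons a (x - 2*B) (y - B) (by omega)
  have hc := CONT hB hq hcons a (y - 2*B)
  rw [show y - 2*B + B = y - B by ring] at hc
  rw [e1, e2, e3, e5]
  omega

lemma Uconst (a : ℤ → A) (x w : ℤ) (hw : x - 1 ≤ w) :
    ∀ y, x - B ≤ y → y ≤ x + B →
    UU (B:=B) (f:=f) (φ:=φ) (q:=q) a x y w = UU (B:=B) (f:=f) (φ:=φ) (q:=q) a x (x - B) w := by
  refine Int.le_induction ?_ ?_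
  · intros; rfl
  · intro y hy ih h2
    rw [Ustep hB hq hcons a x w y hy (by omega)]
    exact ih (by omega)

lemma C2sum (a : ℤ → A) (x : ℤ) :
    ∑ y ∈ Finset.Icc (x - B) (x + B), ((dd B f φ q a y (x - y) : ℤ)) = Q B f φ a x := by
  set Pv := UU (B:=B) (f:=f) (φ:=φ) (q:=q) a x (x - B) x with hPv
  set Qv := UU (B:=B) (f:=f) (φ:=φ) (q:=q) a x (x - B) (x - 1) with hQv
  have hPQdiff : Pv - Qv = Q B f φ a x := by
    rw [hPv, hQv]
    unfold UU
    have := Trel_mono (B:=B) (f:=f) (q:=q) hB hq hcons a (x - B) x (by omega)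
    omega
  have hQP : Qv ≤ Pv := by
    have := Q_nonneg (B:=B) (f:=f) (φ:=φ) a x
    omega
  have hterm : ∀ y ∈ Finset.Icc (x - B) (x + B), ((dd B f φ q a y (x - y) : ℤ))
      = max 0 (min Pv (Srel B φ a (x - 2*B) y)
          - max Qv (Srel B φ a (x - 2*B) (y - 1))) := by
    intro y hy
    rw [Finset.mem_Icc] at hy
    unfold dd
    rw [show y + (x - y) = x by ring]
    have r1 := Srel_rebase (B:=B) (f:=f) (q:=q) hB hq hcons a x y y (by omega) (by omega)
    have r2 := Srel_rebase (B:=B) (f:=f) (q:=q) hB hq hcons a x y (y - 1) (by omega) (by omega)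
    have r3 : Trel B f φ q a y x
        = Pv - Srel B φ a (x - 2*B) (y - B - 1) := by
      rw [hPv, ← Uconst hB hq hcons a x x (by omega) y hy.1 hy.2]
      unfold UU; ring
    have r4 : Trel B f φ q a y (x - 1)
        = Qv - Srel B φ a (x - 2*B) (y - B - 1) := by
      rw [hQv, ← Uconst hB hq hcons a x (x - 1) (by omega) y hy.1 hy.2]
      unfold UU; ring
    rw [r1, r2, r3, r4]
    omega
  rw [Finset.sum_congr rfl hterm]
  rw [clamp_sum (Srel B φ a (x - 2*B)) _ _ hQP (x - B) (x + B) (by omega) ?_]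
  · -- coverage
    have hhi : Pv ≤ Srel B φ a (x - 2*B) (x + B) := by
      have h := c2_hi hB hq hcons a (x + B)
      rw [show x + B - B = x by ring] at h
      have r := Srel_rebase (B:=B) (f:=f) (q:=q) hB hq hcons a x (x + B) (x + B) (by omega) (by omega)
      have r3 : Trel B f φ q a (x + B) x
          = Pv - Srel B φ a (x - 2*B) (x + B - B - 1) := by
        rw [hPv, ← Uconst hB hq hcons a x x (by omega) (x + B) (by omega) (by omega)]
        unfold UU; ring
      rw [r3] at h
      rw [show x + B - B - 1 = x - 1 by ring] at *
      omega
    have hlo : Srel B φ a (x - 2*B) (x - B - 1) ≤ Qv := by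
      have h := c2_lo hB hq hcons a (x - B)
      rw [show x - B + B - 1 = x - 1 by ring] at h
      have r := Srel_rebase (B:=B) (f:=f) (q:=q) hB hq hcons a x (x - B) (x - B - 1) (by omega) (by omega)
      have r4 : Trel B f φ q a (x - B) (x - 1)
          = Qv - Srel B φ a (x - 2*B) (x - B - B - 1) := by
        rw [hQv]
        have := Uconst hB hq hcons a x (x - 1) (by omega) (x - B) (by omega) (by omega)
        unfold UU at this ⊢
        omega
      rw [r4] at h
      rw [show x - B - B - 1 = x - 2*B - 1 by ring] at *
      omega
    omega
  · intro w hw1 _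
    have := Srel_mono (B:=B) (f:=f) (q:=q) hB hq hcons a (x - 2*B) w (by omega)
    have := P_nonneg (φ := φ) a w
    omega

end

end CAflow

namespace CAflow

section

variable {A : Type*} {B : ℤ}
  {f : ((Finset.Icc (-B) B : Finset ℤ) → A) → A}
  {φ : A → ℕ} {q : A}

lemma Q_shift (c a : ℤ → A) (x z : ℤ) (hz1 : -B ≤ z) (hz2 : z ≤ B)
    (hc : ∀ u, -(2*B) ≤ u → u ≤ 2*B → c u = a (x + u)) :
    Q B f φ c z = Q B f φ a (x + z) := by
  unfold Q induce
  have : (fun j : (Finset.Icc (-B) B : Finset ℤ) => c (z + j.1))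
      = fun j : (Finset.Icc (-B) B : Finset ℤ) => a (x + z + j.1) := by
    funext j
    have hj := j.2
    rw [Finset.mem_Icc] at hj
    rw [hc _ (by omega) (by omega), show x + (z + j.1) = x + z + j.1 by ring]
  rw [this]

lemma Lam_shift (c a : ℤ → A) (x : ℤ)
    (hc : ∀ u, -(2*B) ≤ u → u ≤ 2*B → c u = a (x + u)) (hB : 1 ≤ B) :
    Lam B f φ q c (0 - 2*B) = Lam B f φ q a (x - 2*B) := by
  unfold Lam
  rw [sum_shift (Q B f φ (Ltr q (0 - 2*B) c)) (Q B f φ (Ltr q (x - 2*B) a))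
    (0 - 2*B - B) (0 - 2*B + B - 1) x ?_]
  · rw [show x + (0 - 2*B - B) = x - 2*B - B by ring,
      show x + (0 - 2*B + B - 1) = x - 2*B + B - 1 by ring]
  · intro y hy1 hy2
    unfold Q induce
    have : (fun j : (Finset.Icc (-B) B : Finset ℤ) => Ltr q (0 - 2*B) c (y + j.1))
        = fun j : (Finset.Icc (-B) B : Finset ℤ) => Ltr q (x - 2*B) a (x + y + j.1) := by
      funext j
      have hj := j.2
      rw [Finset.mem_Icc] at hj
      unfold Ltr
      by_cases hcase : 0 - 2*B ≤ y + j.1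
      · rw [if_pos hcase, if_pos (by omega), hc _ (by omega) (by omega),
          show x + (y + j.1) = x + y + j.1 by ring]
      · rw [if_neg hcase, if_neg (by omega)]
    rw [this]

lemma dd_shift (c a : ℤ → A) (x k : ℤ) (hk1 : -B ≤ k) (hk2 : k ≤ B) (hB : 1 ≤ B)
    (hc : ∀ u, -(2*B) ≤ u → u ≤ 2*B → c u = a (x + u)) :
    dd B f φ q c 0 k = dd B f φ q a x k := by
  have hP : ∀ u, -(2*B) ≤ u → u ≤ 2*B → P φ c u = P φ a (x + u) := by
    intro u h1 h2
    unfold P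
    rw [hc u h1 h2]
  have hS : ∀ u, u ≤ 0 → Srel B φ c 0 u = Srel B φ a x (x + u) := by
    intro u hu
    unfold Srel
    rw [sum_shift (P φ c) (P φ a) (0 - B) u x
      (fun z h1 h2 => hP z (by omega) (by omega))]
    rw [show x + (0 - B) = x - B by ring]
  have hT : ∀ w, -B - 1 ≤ w → w ≤ B → Trel B f φ q c 0 w = Trel B f φ q a x (x + w) := by
    intro w h1 h2
    unfold Trel
    rw [Lam_shift c a x hc hB]
    rw [sum_shift (P φ c) (P φ a) (0 - 2*B) (0 - B - 1) x
      (fun z hz1 hz2 => hP z (by omega) (by omega))]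
    rw [sum_shift (Q B f φ c) (Q B f φ a) (0 - B) w x
      (fun z hz1 hz2 => Q_shift c a x z (by omega) (by omega) hc)]
    rw [show x + (0 - 2*B) = x - 2*B by ring, show x + (0 - B - 1) = x - B - 1 by ring,
      show x + (0 - B) = x - B by ring]
  unfold dd
  rw [show (0:ℤ) + k - 1 = k - 1 by ring, show (0:ℤ) + k = k by ring,
    show (0:ℤ) - 1 = -1 by ring]
  rw [hS 0 (by omega), hS (-1) (by omega), hT k (by omega) (by omega),
    hT (k - 1) (by omega) (by omega)]
  rw [show x + 0 = x by ring, show x + -1 = x - 1 by ring,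
    show x + (k - 1) = x + k - 1 by ring]

end

end CAflow

open CAflow

theorem stmt16 {A : Type*} [Fintype A] [Nonempty A] (B : ℤ) (hB : 1 ≤ B)
    (f : ((Finset.Icc (-B) B : Finset ℤ) → A) → A) (φ : A → ℕ)
    (hcons : conserved (Finset.Icc (-B) B) f φ) :
    ∃ d : ((Finset.Icc (-(2 * B)) (2 * B) : Finset ℤ) → A) →
          ((Finset.Icc (-B) B : Finset ℤ) → ℕ),
      ∀ (a : ℤ → A) (x : ℤ),
        (φ (a x) = ∑ y ∈ (Finset.Icc (x - B) (x + B)).attach,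
            d (fun j => a (x + j.1))
              ⟨y.1 - x, by
                have hy := y.2
                rw [Finset.mem_Icc] at hy ⊢
                omega⟩) ∧
        (φ (induce (Finset.Icc (-B) B) f a x) =
          ∑ y ∈ (Finset.Icc (x - B) (x + B)).attach,
            d (fun j => a (y.1 + j.1))
              ⟨x - y.1, by
                have hy := y.2
                rw [Finset.mem_Icc] at hy ⊢
                omega⟩) := by
  obtain ⟨q, hq⟩ := hcons.1
  refine ⟨fun w k =>
    dd B f φ q (fun z => if h : z ∈ (Finset.Icc (-(2 * B)) (2 * B) : Finset ℤ)
      then w ⟨z, h⟩ else q) 0 k.1, fun a x => ⟨?_, ?_⟩⟩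
  · -- C1
    have hsum : ∑ y ∈ (Finset.Icc (x - B) (x + B)).attach,
        dd B f φ q (fun z => if h : z ∈ (Finset.Icc (-(2 * B)) (2 * B) : Finset ℤ)
          then a (x + z) else q) 0 (y.1 - x)
        = ∑ y ∈ Finset.Icc (x - B) (x + B), dd B f φ q a x (y - x) := by
      rw [← Finset.sum_attach (Finset.Icc (x - B) (x + B))
        (fun y => dd B f φ q a x (y - x))]
      refine Finset.sum_congr rfl ?_
      intro y _
      have hy := y.2
      rw [Finset.mem_Icc] at hy
      refine dd_shift _ a x (y.1 - x) (by omega) (by omega) hB ?_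
      intro u h1 h2
      rw [dif_pos (by rw [Finset.mem_Icc]; omega)]
    have h1 := C1sum hB hq hcons a x
    have h2 : ((∑ y ∈ Finset.Icc (x - B) (x + B), dd B f φ q a x (y - x) : ℕ) : ℤ)
        = ∑ y ∈ Finset.Icc (x - B) (x + B), ((dd B f φ q a x (y - x) : ℤ)) := by
      push_cast
      rfl
    have := h2.trans h1
    unfold P at this
    show φ (a x) = ∑ y ∈ (Finset.Icc (x - B) (x + B)).attach,
        dd B f φ q (fun z => if h : z ∈ (Finset.Icc (-(2 * B)) (2 * B) : Finset ℤ)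
          then a (x + z) else q) 0 (y.1 - x)
    rw [hsum]
    exact_mod_cast this.symm
  · -- C2
    have hsum : ∑ y ∈ (Finset.Icc (x - B) (x + B)).attach,
        dd B f φ q (fun z => if h : z ∈ (Finset.Icc (-(2 * B)) (2 * B) : Finset ℤ)
          then a (y.1 + z) else q) 0 (x - y.1)
        = ∑ y ∈ Finset.Icc (x - B) (x + B), dd B f φ q a y (x - y) := by
      rw [← Finset.sum_attach (Finset.Icc (x - B) (x + B))
        (fun y => dd B f φ q a y (x - y))]
      refine Finset.sum_congr rfl ?_
      intro y _
      have hy := y.2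
      rw [Finset.mem_Icc] at hy
      refine dd_shift _ a y.1 (x - y.1) (by omega) (by omega) hB ?_
      intro u h1 h2
      rw [dif_pos (by rw [Finset.mem_Icc]; omega)]
    have h1 := C2sum hB hq hcons a x
    have h2 : ((∑ y ∈ Finset.Icc (x - B) (x + B), dd B f φ q a y (x - y) : ℕ) : ℤ)
        = ∑ y ∈ Finset.Icc (x - B) (x + B), ((dd B f φ q a y (x - y) : ℤ)) := by
      push_cast
      rfl
    have := h2.trans h1
    unfold Q at this
    show φ (induce (Finset.Icc (-B) B) f a x) = ∑ y ∈ (Finset.Icc (x - B) (x + B)).attach,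
        dd B f φ q (fun z => if h : z ∈ (Finset.Icc (-(2 * B)) (2 * B) : Finset ℤ)
          then a (y.1 + z) else q) 0 (x - y.1)
    rw [hsum]
    exact_mod_cast this.symm
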